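/- arXiv:1805.12543 — 3 statements merged into one kernel-verified Lean document; each statement's English description precedes it below -/
import Mathlib

section
/- Let s ∈ (0,1) and let f₀ ∈ L²(ℝ³ₓ × ℝ³ᵥ). Define f(t) via partial Fourier transform in x (dual variable ξ) and v (handled by the characteristic flow): the solution of ∂_t f + v·∂_x f + (-Δ_v)^s f = 0, f(0) = f₀, satisfies on the Fourier side (dual variables ξ for x, η for v) the explicit formula \hat f(t, ξ, η) = \hat{f₀}(ξ, η + tξ) · exp(−∫₀^t |η + (t−τ)ξ|^{2s} dτ). Consequently, there exists c > 0 such that e^{c(t(−Δ_v)^s + t^{2s+1}(−Δ_x)^s)} f(t) ∈ L²(ℝ⁶) for every t > 0, i.e. ∫∫ e^{2c(t|η|^{2s} + t^{2s+1}|ξ|^{2s})} |\hat f(t,ξ,η)|² dξ dη < ∞. -/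
open MeasureTheory

open RealInnerProductSpace in
private lemma proj_lb {n : ℕ} (ξ η : EuclideanSpace ℝ (Fin n)) (hξ : ξ ≠ 0) (σ : ℝ) :
    |⟪η, ξ⟫ / ‖ξ‖ + σ * ‖ξ‖| ≤ ‖η + σ • ξ‖ := by
  have hξ0 : (0:ℝ) < ‖ξ‖ := norm_pos_iff.2 hξ
  have h := abs_real_inner_le_norm (η + σ • ξ) ξ
  rw [inner_add_left, real_inner_smul_left, real_inner_self_eq_norm_sq] at h
  have he : ⟪η, ξ⟫ / ‖ξ‖ + σ * ‖ξ‖ = (⟪η, ξ⟫ + σ * ‖ξ‖ ^ 2) / ‖ξ‖ := by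
    field_simp
  rw [he, abs_div, abs_of_pos hξ0, div_le_iff₀ hξ0]
  exact h

private lemma integral_lb {f : ℝ → ℝ} (hf : Continuous f) (hpos : ∀ x, 0 ≤ f x)
    {a b t m : ℝ} (h0a : 0 ≤ a) (hab : a ≤ b) (hbt : b ≤ t)
    (hm : ∀ x ∈ Set.Icc a b, m ≤ f x) :
    m * (b - a) ≤ ∫ τ in (0:ℝ)..t, f τ := by
  have h1 : m * (b - a) = ∫ _ in a..b, m := by
    rw [intervalIntegral.integral_const, smul_eq_mul, mul_comm]
  rw [h1]
  have h2 : (∫ _ in a..b, m) ≤ ∫ τ in a..b, f τ :=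
    intervalIntegral.integral_mono_on hab intervalIntegrable_const
      (hf.intervalIntegrable a b) hm
  exact h2.trans (intervalIntegral.integral_mono_interval h0a hab hbt
    (Filter.Eventually.of_forall fun x => hpos x) (hf.intervalIntegrable 0 t))

private lemma cont_integrand {s : ℝ} (hs : 0 ≤ s) (t : ℝ)
    (ξ η : EuclideanSpace ℝ (Fin 3)) :
    Continuous fun τ : ℝ => ‖η + (t - τ) • ξ‖ ^ s :=
  (continuous_const.add
    ((continuous_const.sub continuous_id).smul continuous_const)).norm.rpow_const
    (fun _ => Or.inr hs)

open RealInnerProductSpace in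
private lemma key_lb {s : ℝ} (hs0 : 0 < s) (hs1 : s < 1) {t : ℝ} (ht : 0 < t)
    (ξ η : EuclideanSpace ℝ (Fin 3)) :
    t * ‖η‖ ^ (2 * s) + t ^ (2 * s + 1) * ‖ξ‖ ^ (2 * s) ≤
      128 * ∫ τ in (0:ℝ)..t, ‖η + (t - τ) • ξ‖ ^ (2 * s) := by
  set q := 2 * s with hq
  have hq0 : 0 < q := by positivity
  have hq2 : q < 2 := by simp only [hq]; linarith
  set I := ∫ τ in (0:ℝ)..t, ‖η + (t - τ) • ξ‖ ^ q with hI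
  have hcont := cont_integrand (s := q) hq0.le t ξ η
  have hposf : ∀ x : ℝ, 0 ≤ ‖η + (t - x) • ξ‖ ^ q := fun x => Real.rpow_nonneg (norm_nonneg _) q
  have hI0 : 0 ≤ I := by
    have := integral_lb hcont hposf (le_refl (0:ℝ)) ht.le (le_refl t)
      (m := 0) (fun x _ => hposf x)
    simpa using this
  -- ξ bound
  have hξbound : t ^ (q + 1) * ‖ξ‖ ^ q ≤ 64 * I := by
    rcases eq_or_ne ξ 0 with rfl | hξne
    · simp only [norm_zero]
      rw [Real.zero_rpow hq0.ne']
      nlinarith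
    · have hξ0 : (0:ℝ) < ‖ξ‖ := norm_pos_iff.2 hξne
      set r := ⟪η, ξ⟫ / ‖ξ‖ with hr
      have hmain : ((t/4) * ‖ξ‖) ^ q * (t/4) ≤ I := by
        rcases le_or_gt (-(t/2) * ‖ξ‖) r with hcase | hcase
        · have h' := integral_lb hcont hposf (le_refl (0:ℝ)) (by linarith : (0:ℝ) ≤ t/4)
            (by linarith : t/4 ≤ t) (m := ((t/4) * ‖ξ‖) ^ q) ?_
          · calc ((t/4) * ‖ξ‖) ^ q * (t/4) = ((t/4) * ‖ξ‖) ^ q * (t/4 - 0) := by ring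
              _ ≤ I := h'
          · intro x hx
            obtain ⟨hx0, hx1⟩ := hx
            have h1 : (t/4) * ‖ξ‖ ≤ r + (t - x) * ‖ξ‖ := by nlinarith
            have h2 : r + (t - x) * ‖ξ‖ ≤ |r + (t - x) * ‖ξ‖| := le_abs_self _
            have h3 := proj_lb ξ η hξne (t - x)
            exact Real.rpow_le_rpow (by positivity) (by linarith) hq0.le
        · have h' := integral_lb hcont hposf (by linarith : (0:ℝ) ≤ 3*t/4)
            (by linarith : 3*t/4 ≤ t) (le_refl t) (m := ((t/4) * ‖ξ‖) ^ q) ?_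
          · calc ((t/4) * ‖ξ‖) ^ q * (t/4) = ((t/4) * ‖ξ‖) ^ q * (t - 3*t/4) := by ring
              _ ≤ I := h'
          · intro x hx
            obtain ⟨hx0, hx1⟩ := hx
            have h1 : (t/4) * ‖ξ‖ ≤ -(r + (t - x) * ‖ξ‖) := by nlinarith
            have h2 : -(r + (t - x) * ‖ξ‖) ≤ |r + (t - x) * ‖ξ‖| := neg_le_abs _
            have h3 := proj_lb ξ η hξne (t - x)
            exact Real.rpow_le_rpow (by positivity) (by linarith) hq0.le
      have e1 : ((t/4) * ‖ξ‖) ^ q = (t/4) ^ q * ‖ξ‖ ^ q :=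
        Real.mul_rpow (by positivity) (norm_nonneg ξ)
      have e2 : t ^ q = 4 ^ q * (t/4) ^ q := by
        rw [← Real.mul_rpow (by norm_num) (by positivity)]
        congr 1; ring
      have e3 : (4:ℝ) ^ q ≤ 16 := by
        calc (4:ℝ) ^ q ≤ 4 ^ (2:ℝ) :=
              Real.rpow_le_rpow_of_exponent_le (by norm_num) hq2.le
          _ = 16 := by
              rw [show (2:ℝ) = ((2:ℕ):ℝ) by norm_num, Real.rpow_natCast]; norm_num
      have e4 : t ^ (q + 1) = t ^ q * t := by rw [Real.rpow_add ht, Real.rpow_one]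
      have hp1 : 0 ≤ (t/4) ^ q := Real.rpow_nonneg (by positivity) q
      have hp2 : 0 ≤ ‖ξ‖ ^ q := Real.rpow_nonneg (norm_nonneg _) q
      calc t ^ (q + 1) * ‖ξ‖ ^ q = (4 ^ q * (t/4) ^ q) * ‖ξ‖ ^ q * t := by
            rw [e4, ← e2]; ring
        _ ≤ 16 * (t/4) ^ q * ‖ξ‖ ^ q * t := by nlinarith [mul_le_mul_of_nonneg_right e3 (mul_nonneg (mul_nonneg hp1 hp2) ht.le)]
        _ = 64 * ((t/4) ^ q * ‖ξ‖ ^ q * (t/4)) := by ring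
        _ = 64 * (((t/4) * ‖ξ‖) ^ q * (t/4)) := by rw [e1]
        _ ≤ 64 * I := by linarith
  -- η bound
  have hηbound : t * ‖η‖ ^ q ≤ 64 * I := by
    rcases le_or_gt ‖η‖ (t * ‖ξ‖) with hcase | hcase
    · have h1 : ‖η‖ ^ q ≤ (t * ‖ξ‖) ^ q :=
        Real.rpow_le_rpow (norm_nonneg _) hcase hq0.le
      have h2 : (t * ‖ξ‖) ^ q = t ^ q * ‖ξ‖ ^ q := Real.mul_rpow ht.le (norm_nonneg _)
      have h3 : t * (t ^ q * ‖ξ‖ ^ q) = t ^ (q + 1) * ‖ξ‖ ^ q := by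
        rw [Real.rpow_add ht, Real.rpow_one]; ring
      have h4 : t * ‖η‖ ^ q ≤ t * (t * ‖ξ‖) ^ q := by nlinarith
      rw [h2] at h4
      rw [h3] at h4
      linarith
    · have h' := integral_lb hcont hposf (by linarith : (0:ℝ) ≤ t/2)
        (by linarith : t/2 ≤ t) (le_refl t) (m := (‖η‖/2) ^ q) ?_
      · have e1 : (‖η‖/2) ^ q = (1/2) ^ q * ‖η‖ ^ q := by
          rw [← Real.mul_rpow (by norm_num) (norm_nonneg _), one_div, inv_mul_eq_div]
        have e3 : (1:ℝ)/4 ≤ (1/2 : ℝ) ^ q := by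
          calc ((1:ℝ)/4) = (1/2 : ℝ) ^ (2:ℝ) := by
                rw [show (2:ℝ) = ((2:ℕ):ℝ) by norm_num, Real.rpow_natCast]; norm_num
            _ ≤ (1/2 : ℝ) ^ q :=
                Real.rpow_le_rpow_of_exponent_ge (by norm_num) (by norm_num) hq2.le
        have hp2 : 0 ≤ ‖η‖ ^ q := Real.rpow_nonneg (norm_nonneg _) q
        have hIk : (‖η‖/2) ^ q * (t - t/2) ≤ I := h'
        rw [e1] at hIk
        nlinarith
      · intro x hx
        obtain ⟨hx0, hx1⟩ := hx
        have h1 : ‖η‖ ≤ ‖η + (t - x) • ξ‖ + ‖(t - x) • ξ‖ := by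
          calc ‖η‖ = ‖(η + (t - x) • ξ) - (t - x) • ξ‖ := by rw [add_sub_cancel_right]
            _ ≤ ‖η + (t - x) • ξ‖ + ‖(t - x) • ξ‖ := norm_sub_le _ _
        have h2 : ‖(t - x) • ξ‖ = (t - x) * ‖ξ‖ := by
          rw [norm_smul, Real.norm_eq_abs, abs_of_nonneg (by linarith)]
        have h3 : (t - x) * ‖ξ‖ ≤ (t/2) * ‖ξ‖ := by nlinarith [norm_nonneg ξ]
        have h4 : (t/2) * ‖ξ‖ ≤ ‖η‖/2 := by nlinarith
        have h5 : ‖η‖/2 ≤ ‖η + (t - x) • ξ‖ := by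
          rw [h2] at h1; linarith
        exact Real.rpow_le_rpow (by positivity) h5 hq0.le
  linarith

/-- The Fourier-side solution of the generalized Kolmogorov equation
`∂_t f + v·∂_x f + (-Δ_v)^s f = 0`:
`f̂(t,ξ,η) = f̂₀(ξ, η+tξ)·exp(−∫₀^t |η+(t−τ)ξ|^{2s} dτ)`. -/
noncomputable def kolmogorovFourierSol (s : ℝ)
    (f0hat : EuclideanSpace ℝ (Fin 3) → EuclideanSpace ℝ (Fin 3) → ℂ)
    (t : ℝ) (ξ η : EuclideanSpace ℝ (Fin 3)) : ℂ :=
  f0hat ξ (η + t • ξ) *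
    Complex.exp (-(∫ τ in (0 : ℝ)..t, ‖η + (t - τ) • ξ‖ ^ (2 * s) : ℝ))

/-- Gevrey regularization for the generalized Kolmogorov equation: if `f₀ ∈ L²(ℝ⁶)`, then the
solution given by the explicit Fourier formula satisfies
`e^{c(t(−Δ_v)^s + t^{2s+1}(−Δ_x)^s)} f(t) ∈ L²` for some `c > 0` and all `t > 0`, i.e.
`∫∫ e^{2c(t|η|^{2s}+t^{2s+1}|ξ|^{2s})}|f̂(t,ξ,η)|² dξ dη < ∞`. -/
theorem kolmogorov_gevrey_smoothing (s : ℝ) (hs : s ∈ Set.Ioo (0 : ℝ) 1)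
    (f0hat : EuclideanSpace ℝ (Fin 3) → EuclideanSpace ℝ (Fin 3) → ℂ)
    (hf0 : Integrable (fun p : EuclideanSpace ℝ (Fin 3) × EuclideanSpace ℝ (Fin 3) =>
      ‖f0hat p.1 p.2‖ ^ 2)) :
    ∃ c > (0 : ℝ), ∀ t > (0 : ℝ),
      Integrable (fun p : EuclideanSpace ℝ (Fin 3) × EuclideanSpace ℝ (Fin 3) =>
        Real.exp (2 * c * (t * ‖p.2‖ ^ (2 * s) + t ^ (2 * s + 1) * ‖p.1‖ ^ (2 * s))) *
          ‖kolmogorovFourierSol s f0hat t p.1 p.2‖ ^ 2) := by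
  obtain ⟨hs0, hs1⟩ := hs
  refine ⟨1/128, by norm_num, fun t ht => ?_⟩
  -- the shear is measure preserving
  have hT : MeasurePreserving (fun p : EuclideanSpace ℝ (Fin 3) × EuclideanSpace ℝ (Fin 3) => (p.1, p.2 + t • p.1))
      (volume : Measure (EuclideanSpace ℝ (Fin 3) × EuclideanSpace ℝ (Fin 3))) (volume : Measure (EuclideanSpace ℝ (Fin 3) × EuclideanSpace ℝ (Fin 3))) := by
    rw [MeasureTheory.Measure.volume_eq_prod]
    exact (MeasurePreserving.id volume).skew_product
      (g := fun ξ η => η + t • ξ)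
      (measurable_snd.add (measurable_fst.const_smul t))
      (Filter.Eventually.of_forall fun ξ => map_add_right_eq_self volume (t • ξ))
  have hg : Integrable (fun p : EuclideanSpace ℝ (Fin 3) × EuclideanSpace ℝ (Fin 3) => ‖f0hat p.1 (p.2 + t • p.1)‖ ^ 2) :=
    (hT.integrable_comp hf0.1).2 hf0
  -- continuity of the dissipation integral in (ξ, η)
  have hIcont : Continuous (fun p : EuclideanSpace ℝ (Fin 3) × EuclideanSpace ℝ (Fin 3) =>
      ∫ τ in (0:ℝ)..t, ‖p.2 + (t - τ) • p.1‖ ^ (2 * s)) := by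
    apply intervalIntegral.continuous_parametric_intervalIntegral_of_continuous'
    show Continuous fun q : (EuclideanSpace ℝ (Fin 3) × EuclideanSpace ℝ (Fin 3)) × ℝ => ‖q.1.2 + (t - q.2) • q.1.1‖ ^ (2 * s)
    exact ((continuous_fst.snd.add
      ((continuous_const.sub continuous_snd).smul continuous_fst.fst)).norm).rpow_const
      (fun _ => Or.inr (by linarith))
  -- the auxiliary (integrable) majorant
  have hXcont : Continuous (fun p : EuclideanSpace ℝ (Fin 3) × EuclideanSpace ℝ (Fin 3) =>
      Real.exp (2 * (1/128) * (t * ‖p.2‖ ^ (2 * s) + t ^ (2 * s + 1) * ‖p.1‖ ^ (2 * s)))) := by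
    apply Real.continuous_exp.comp
    apply continuous_const.mul
    exact (continuous_const.mul (continuous_snd.norm.rpow_const
        (fun _ => Or.inr (by linarith)))).add
      (continuous_const.mul (continuous_fst.norm.rpow_const (fun _ => Or.inr (by linarith))))
  have hfactcont : Continuous (fun p : EuclideanSpace ℝ (Fin 3) × EuclideanSpace ℝ (Fin 3) =>
      Real.exp (2 * (1/128) * (t * ‖p.2‖ ^ (2 * s) + t ^ (2 * s + 1) * ‖p.1‖ ^ (2 * s))) *
        Real.exp (-(∫ τ in (0:ℝ)..t, ‖p.2 + (t - τ) • p.1‖ ^ (2 * s))) ^ 2) :=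
    hXcont.mul ((Real.continuous_exp.comp hIcont.neg).pow 2)
  have hnice : Integrable (fun p : EuclideanSpace ℝ (Fin 3) × EuclideanSpace ℝ (Fin 3) =>
      ‖f0hat p.1 (p.2 + t • p.1)‖ ^ 2 *
        (Real.exp (2 * (1/128) * (t * ‖p.2‖ ^ (2 * s) + t ^ (2 * s + 1) * ‖p.1‖ ^ (2 * s))) *
          Real.exp (-(∫ τ in (0:ℝ)..t, ‖p.2 + (t - τ) • p.1‖ ^ (2 * s))) ^ 2)) := by
    apply Integrable.mono' hg (hg.1.mul hfactcont.aestronglyMeasurable)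
    refine Filter.Eventually.of_forall fun p => ?_
    simp only [Pi.mul_apply]
    have hkey := key_lb hs0 hs1 ht p.1 p.2
    set X := t * ‖p.2‖ ^ (2 * s) + t ^ (2 * s + 1) * ‖p.1‖ ^ (2 * s) with hX
    set Ii := ∫ τ in (0:ℝ)..t, ‖p.2 + (t - τ) • p.1‖ ^ (2 * s) with hIi
    have hfle : Real.exp (2 * (1/128) * X) * Real.exp (-Ii) ^ 2 ≤ 1 := by
      rw [pow_two, ← Real.exp_add, ← Real.exp_add]
      rw [Real.exp_le_one_iff]
      linarith
    have hfpos : 0 ≤ Real.exp (2 * (1/128) * X) * Real.exp (-Ii) ^ 2 := by positivity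
    rw [Real.norm_eq_abs, abs_of_nonneg (mul_nonneg (by positivity) hfpos)]
    calc ‖f0hat p.1 (p.2 + t • p.1)‖ ^ 2 * (Real.exp (2 * (1/128) * X) * Real.exp (-Ii) ^ 2)
        ≤ ‖f0hat p.1 (p.2 + t • p.1)‖ ^ 2 * 1 :=
          mul_le_mul_of_nonneg_left hfle (by positivity)
      _ = ‖f0hat p.1 (p.2 + t • p.1)‖ ^ 2 := mul_one _
  apply hnice.congr
  refine Filter.Eventually.of_forall fun p => ?_
  dsimp only
  have hns : ‖kolmogorovFourierSol s f0hat t p.1 p.2‖ =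
      ‖f0hat p.1 (p.2 + t • p.1)‖ *
        Real.exp (-(∫ τ in (0:ℝ)..t, ‖p.2 + (t - τ) • p.1‖ ^ (2 * s))) := by
    unfold kolmogorovFourierSol
    rw [norm_mul]
    congr 1
    rw [Complex.norm_exp]
    norm_num
  rw [hns]
  ring
end

section
/- Let s ∈ (0,1). There exists a constant c = c(s) > 0 such that for all t > 0 and all ξ, η ∈ ℝ³: ∫₀^t |η + τξ|^{2s} dτ ≥ c (t|η|^{2s} + t^{1+2s}|ξ|^{2s}). -/
open intervalIntegral MeasureTheory


/-- Hypoelliptic lower bound: for `s ∈ (0,1)` there is `c = c(s) > 0` with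
`∫₀^t |η + τξ|^{2s} dτ ≥ c(t|η|^{2s} + t^{1+2s}|ξ|^{2s})` for all `t > 0`, `ξ, η ∈ ℝ³`. -/
theorem time_average_lower_bound (s : ℝ) (hs : s ∈ Set.Ioo (0 : ℝ) 1) :
    ∃ c > (0 : ℝ), ∀ t > (0 : ℝ), ∀ ξ η : EuclideanSpace ℝ (Fin 3),
      c * (t * ‖η‖ ^ (2 * s) + t ^ (1 + 2 * s) * ‖ξ‖ ^ (2 * s))
        ≤ ∫ τ in (0 : ℝ)..t, ‖η + τ • ξ‖ ^ (2 * s) := by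
  obtain ⟨hs0, hs1⟩ := hs
  have hP0 : 0 < 2 * s := by positivity
  have hP2 : 2 * s ≤ 2 := by linarith
  refine ⟨1/1280, by norm_num, ?_⟩
  intro t ht ξ η
  have hcont : Continuous fun τ : ℝ => ‖η + τ • ξ‖ ^ (2 * s) :=
    ((continuous_const.add (continuous_id.smul continuous_const)).norm).rpow_const
      fun τ => Or.inr hP0.le
  have hint : ∀ a b : ℝ, IntervalIntegrable (fun τ : ℝ => ‖η + τ • ξ‖ ^ (2 * s)) volume a b :=
    fun a b => hcont.intervalIntegrable a b
  have htP : t ^ (1 + 2 * s) = t * t ^ (2 * s) := by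
    rw [Real.rpow_add ht, Real.rpow_one]
  have h2P : (2:ℝ) ^ (2*s) ≤ 4 := by
    calc (2:ℝ) ^ (2*s) ≤ (2:ℝ) ^ (2:ℝ) :=
          Real.rpow_le_rpow_of_exponent_le one_le_two hP2
      _ = 4 := by
          rw [Real.rpow_two]; norm_num
  have h8P : (8:ℝ) ^ (2*s) ≤ 64 := by
    calc (8:ℝ) ^ (2*s) ≤ (8:ℝ) ^ (2:ℝ) :=
          Real.rpow_le_rpow_of_exponent_le (by norm_num) hP2
      _ = 64 := by
          rw [Real.rpow_two]; norm_num
  by_cases hcase : t * ‖ξ‖ ≤ ‖η‖ / 2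
  · -- Case 1: the integrand is ≥ (‖η‖/2)^(2s) on [0,t]
    have hlow : ∀ τ ∈ Set.Icc (0:ℝ) t,
        (fun _ : ℝ => (‖η‖/2) ^ (2*s)) τ ≤ ‖η + τ • ξ‖ ^ (2 * s) := by
      intro τ hτ
      apply Real.rpow_le_rpow (by positivity) _ hP0.le
      have h1 : ‖η‖ ≤ ‖η + τ • ξ‖ + ‖τ • ξ‖ := by
        have := norm_sub_le (η + τ • ξ) (τ • ξ)
        simpa using this
      have h2 : ‖τ • ξ‖ = τ * ‖ξ‖ := by
        rw [norm_smul, Real.norm_eq_abs, abs_of_nonneg hτ.1]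
      have h3 : τ * ‖ξ‖ ≤ t * ‖ξ‖ :=
        mul_le_mul_of_nonneg_right hτ.2 (norm_nonneg ξ)
      linarith
    have hmono := intervalIntegral.integral_mono_on ht.le
      intervalIntegrable_const (hint 0 t) hlow
    rw [intervalIntegral.integral_const, smul_eq_mul] at hmono
    have hkey : t ^ (2*s) * ‖ξ‖ ^ (2*s) ≤ ‖η‖ ^ (2*s) := by
      rw [← Real.mul_rpow ht.le (norm_nonneg ξ)]
      exact Real.rpow_le_rpow (by positivity) (by nlinarith [norm_nonneg η]) hP0.le
    have hhalf : ‖η‖ ^ (2*s) / 4 ≤ (‖η‖/2) ^ (2*s) := by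
      rw [Real.div_rpow (norm_nonneg η) (by norm_num)]
      apply div_le_div_of_nonneg_left (by positivity) (by positivity) h2P
    have hnn : (0:ℝ) ≤ ‖η‖ ^ (2*s) := by positivity
    calc 1/1280 * (t * ‖η‖ ^ (2*s) + t ^ (1 + 2*s) * ‖ξ‖ ^ (2*s))
        = 1/1280 * (t * ‖η‖ ^ (2*s) + t * (t ^ (2*s) * ‖ξ‖ ^ (2*s))) := by
          rw [htP]; ring
      _ ≤ 1/1280 * (t * ‖η‖ ^ (2*s) + t * ‖η‖ ^ (2*s)) := by
          have := mul_le_mul_of_nonneg_left hkey ht.le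
          linarith
      _ ≤ t * (‖η‖ ^ (2*s) / 4) := by nlinarith [mul_nonneg ht.le hnn]
      _ ≤ t * (‖η‖/2) ^ (2*s) := by
          exact mul_le_mul_of_nonneg_left hhalf ht.le
      _ = (t - 0) * (‖η‖/2) ^ (2*s) := by ring
      _ ≤ _ := hmono
  · -- Case 2: ‖η‖ ≤ 2 t ‖ξ‖
    push_neg at hcase
    have hηle : ‖η‖ ≤ 2 * (t * ‖ξ‖) := by linarith
    -- split the integral
    have h1 : (∫ τ in (0:ℝ)..(t/4), ‖η + τ • ξ‖ ^ (2*s))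
        + (∫ τ in (t/4)..t, ‖η + τ • ξ‖ ^ (2*s))
        = ∫ τ in (0:ℝ)..t, ‖η + τ • ξ‖ ^ (2*s) :=
      intervalIntegral.integral_add_adjacent_intervals (hint _ _) (hint _ _)
    have h2 : (∫ τ in (t/4)..(3*t/4), ‖η + τ • ξ‖ ^ (2*s))
        + (∫ τ in (3*t/4)..t, ‖η + τ • ξ‖ ^ (2*s))
        = ∫ τ in (t/4)..t, ‖η + τ • ξ‖ ^ (2*s) :=
      intervalIntegral.integral_add_adjacent_intervals (hint _ _) (hint _ _)
    have hmid : (0:ℝ) ≤ ∫ τ in (t/4)..(3*t/4), ‖η + τ • ξ‖ ^ (2*s) :=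
      intervalIntegral.integral_nonneg (by linarith) (fun τ _ => by positivity)
    have hshift : (∫ τ in (3*t/4)..t, ‖η + τ • ξ‖ ^ (2*s))
        = ∫ τ in (0:ℝ)..(t/4), ‖η + (τ + 3*t/4) • ξ‖ ^ (2*s) := by
      rw [intervalIntegral.integral_comp_add_right (fun τ => ‖η + τ • ξ‖ ^ (2*s)) (3*t/4)]
      congr 1 <;> ring
    have hcont2 : Continuous fun τ : ℝ => ‖η + (τ + 3*t/4) • ξ‖ ^ (2 * s) :=
      ((continuous_const.add ((continuous_id.add continuous_const).smul
        continuous_const)).norm).rpow_const fun τ => Or.inr hP0.le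
    have hsum : (∫ τ in (0:ℝ)..(t/4), ‖η + τ • ξ‖ ^ (2*s))
        + (∫ τ in (0:ℝ)..(t/4), ‖η + (τ + 3*t/4) • ξ‖ ^ (2*s))
        = ∫ τ in (0:ℝ)..(t/4),
            (‖η + τ • ξ‖ ^ (2*s) + ‖η + (τ + 3*t/4) • ξ‖ ^ (2*s)) :=
      (intervalIntegral.integral_add (hint _ _) (hcont2.intervalIntegrable _ _)).symm
    have hpt : ∀ τ ∈ Set.Icc (0:ℝ) (t/4),
        (fun _ : ℝ => (3*t*‖ξ‖/8) ^ (2*s)) τ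
          ≤ ‖η + τ • ξ‖ ^ (2*s) + ‖η + (τ + 3*t/4) • ξ‖ ^ (2*s) := by
      intro τ hτ
      set a := ‖η + τ • ξ‖ with ha
      set b := ‖η + (τ + 3*t/4) • ξ‖ with hb
      have hab : 3*t/4 * ‖ξ‖ ≤ a + b := by
        have hdiff : (η + (τ + 3*t/4) • ξ) - (η + τ • ξ) = (3*t/4) • ξ := by
          rw [add_smul]; abel
        have := norm_sub_le (η + (τ + 3*t/4) • ξ) (η + τ • ξ)
        rw [hdiff, norm_smul, Real.norm_eq_abs, abs_of_nonneg (by linarith : (0:ℝ) ≤ 3*t/4)]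
          at this
        linarith
      have hM : (0:ℝ) ≤ 3*t*‖ξ‖/8 := by positivity
      rcases le_total a b with h | h
      · calc (3*t*‖ξ‖/8) ^ (2*s) ≤ b ^ (2*s) :=
              Real.rpow_le_rpow hM (by linarith) hP0.le
          _ ≤ a ^ (2*s) + b ^ (2*s) := le_add_of_nonneg_left (by positivity)
      · calc (3*t*‖ξ‖/8) ^ (2*s) ≤ a ^ (2*s) :=
              Real.rpow_le_rpow hM (by linarith) hP0.le
          _ ≤ a ^ (2*s) + b ^ (2*s) := le_add_of_nonneg_right (by positivity)
    have hmono := intervalIntegral.integral_mono_on (by linarith : (0:ℝ) ≤ t/4)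
      intervalIntegrable_const ((hint 0 (t/4)).add (hcont2.intervalIntegrable _ _)) hpt
    rw [intervalIntegral.integral_const, smul_eq_mul] at hmono
    -- arithmetic
    have hηP : ‖η‖ ^ (2*s) ≤ 4 * (t ^ (2*s) * ‖ξ‖ ^ (2*s)) := by
      calc ‖η‖ ^ (2*s) ≤ (2 * (t * ‖ξ‖)) ^ (2*s) :=
            Real.rpow_le_rpow (norm_nonneg η) hηle hP0.le
        _ = 2 ^ (2*s) * (t ^ (2*s) * ‖ξ‖ ^ (2*s)) := by
            rw [Real.mul_rpow (by norm_num) (by positivity),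
                Real.mul_rpow ht.le (norm_nonneg ξ)]
        _ ≤ 4 * (t ^ (2*s) * ‖ξ‖ ^ (2*s)) :=
            mul_le_mul_of_nonneg_right h2P (by positivity)
    have hconst : t ^ (2*s) * ‖ξ‖ ^ (2*s) / 64 ≤ (3*t*‖ξ‖/8) ^ (2*s) := by
      calc t ^ (2*s) * ‖ξ‖ ^ (2*s) / 64
          ≤ t ^ (2*s) * ‖ξ‖ ^ (2*s) / 8 ^ (2*s) := by
            apply div_le_div_of_nonneg_left (by positivity) (by positivity) h8P
        _ = (t*‖ξ‖/8) ^ (2*s) := by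
            rw [Real.div_rpow (by positivity) (by norm_num),
                Real.mul_rpow ht.le (norm_nonneg ξ)]
        _ ≤ (3*t*‖ξ‖/8) ^ (2*s) := by
            apply Real.rpow_le_rpow (by positivity) _ hP0.le
            nlinarith [norm_nonneg ξ, ht.le]
    have hTnn : (0:ℝ) ≤ t ^ (2*s) * ‖ξ‖ ^ (2*s) := by positivity
    calc 1/1280 * (t * ‖η‖ ^ (2*s) + t ^ (1 + 2*s) * ‖ξ‖ ^ (2*s))
        = 1/1280 * (t * ‖η‖ ^ (2*s) + t * (t ^ (2*s) * ‖ξ‖ ^ (2*s))) := by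
          rw [htP]; ring
      _ ≤ 1/1280 * (t * (4 * (t ^ (2*s) * ‖ξ‖ ^ (2*s))) + t * (t ^ (2*s) * ‖ξ‖ ^ (2*s))) := by
          have := mul_le_mul_of_nonneg_left hηP ht.le
          linarith
      _ = (t/4) * (t ^ (2*s) * ‖ξ‖ ^ (2*s) / 64) := by ring
      _ ≤ (t/4) * (3*t*‖ξ‖/8) ^ (2*s) :=
          mul_le_mul_of_nonneg_left hconst (by linarith)
      _ = (t/4 - 0) * (3*t*‖ξ‖/8) ^ (2*s) := by ring
      _ ≤ ∫ τ in (0:ℝ)..(t/4),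
            (‖η + τ • ξ‖ ^ (2*s) + ‖η + (τ + 3*t/4) • ξ‖ ^ (2*s)) := hmono
      _ = (∫ τ in (0:ℝ)..(t/4), ‖η + τ • ξ‖ ^ (2*s))
          + (∫ τ in (3*t/4)..t, ‖η + τ • ξ‖ ^ (2*s)) := by rw [hshift, hsum]
      _ ≤ ∫ τ in (0:ℝ)..t, ‖η + τ • ξ‖ ^ (2*s) := by
          rw [← h1, ← h2]; linarith
end

section
/- Let m ≥ 5 be an integer, s ∈ (0,1), and C₀ ≥ 1 sufficiently large (depending only on s). Then Σ_{j=1}^{⌊m/2⌋-1} [m!/(j·(m-j)⁴)] · ((j-1)!)^{1/(2s)} · ((m-j-4)!)^{1/(2s)} ≤ C C₀ ((m-4)!)^{(1+2s)/(2s)} for a constant C depending only on s (independent of m and C₀). -/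
open Finset

private lemma sqrt_step' (i : ℕ) : (1:ℝ)/((i:ℝ)+1) ≤ 2*(Real.sqrt ((i:ℝ)+1) - Real.sqrt i) := by
  set a := Real.sqrt (i:ℝ) with ha'
  set b := Real.sqrt ((i:ℝ)+1) with hb'
  have ha : 0 ≤ a := Real.sqrt_nonneg _
  have h1 : a ^ 2 = i := Real.sq_sqrt (by positivity)
  have h2 : b ^ 2 = (i:ℝ)+1 := Real.sq_sqrt (by positivity)
  have hab : a ≤ b := Real.sqrt_le_sqrt (by linarith)
  have hb3 : b ≤ (i:ℝ)+1 := by nlinarith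
  rw [div_le_iff₀ (by positivity)]
  nlinarith [mul_nonneg (sub_nonneg.2 hab) (by nlinarith : (0:ℝ) ≤ 2*((i:ℝ)+1) - (a+b))]

private lemma harmonic_le' (K : ℕ) :
    ∑ j ∈ Finset.Ico 1 (K+1), (1:ℝ)/(j:ℝ) ≤ 2 * Real.sqrt K := by
  rw [Finset.sum_Ico_eq_sum_range]
  simp only [Nat.add_sub_cancel]
  calc ∑ i ∈ Finset.range K, (1:ℝ)/((1+i : ℕ):ℝ)
      ≤ ∑ i ∈ Finset.range K, 2*(Real.sqrt ((i:ℝ)+1) - Real.sqrt i) := by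
        apply Finset.sum_le_sum
        intro i _
        have := sqrt_step' i
        push_cast at this ⊢
        rw [add_comm (1:ℝ) (i:ℝ)]
        linarith
    _ = 2 * ∑ i ∈ Finset.range K, ((fun n : ℕ => Real.sqrt n) (i+1) - (fun n : ℕ => Real.sqrt n) i) := by
        rw [Finset.mul_sum]
        apply Finset.sum_congr rfl
        intro i _
        push_cast
        ring
    _ = 2 * (Real.sqrt K - Real.sqrt 0) := by
        rw [Finset.sum_range_sub (fun n : ℕ => Real.sqrt n)]; norm_num
    _ ≤ 2 * Real.sqrt K := by simp

private lemma fact_le_pow_mul (k : ℕ) : (k+5).factorial ≤ (k+5)^4 * (k+1).factorial := by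
  have h : (k+5).factorial = (k+5)*((k+4)*((k+3)*((k+2)*(k+1).factorial))) := by
    simp [Nat.factorial_succ]
  rw [h]
  calc (k+5)*((k+4)*((k+3)*((k+2)*(k+1).factorial)))
      ≤ (k+5)*((k+5)*((k+5)*((k+5)*(k+1).factorial))) := by gcongr <;> omega
    _ = (k+5)^4 * (k+1).factorial := by ring

/-- Key combinatorial estimate for closing the Gevrey induction: for `s ∈ (0,1)` there is
`C = C(s) > 0` such that for all `C₀ ≥ 1` and integers `m ≥ 5`,
`Σ_{j=1}^{⌊m/2⌋-1} [m!/(j(m-j)⁴)]((j-1)!)^{1/(2s)}((m-j-4)!)^{1/(2s)}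
  ≤ C C₀ ((m-4)!)^{(1+2s)/(2s)}`. -/
theorem gevrey_induction_sum_bound (s : ℝ) (hs : s ∈ Set.Ioo (0 : ℝ) 1) :
    ∃ C > (0 : ℝ), ∀ C₀ : ℝ, 1 ≤ C₀ → ∀ m : ℕ, 5 ≤ m →
      ∑ j ∈ Finset.Ico 1 (m / 2),
          (m.factorial : ℝ) / ((j : ℝ) * ((m - j : ℕ) : ℝ) ^ 4)
            * ((j - 1).factorial : ℝ) ^ (1 / (2 * s))
            * ((m - j - 4).factorial : ℝ) ^ (1 / (2 * s))
        ≤ C * C₀ * ((m - 4).factorial : ℝ) ^ ((1 + 2 * s) / (2 * s)) := by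
  obtain ⟨hs0, hs1⟩ := hs
  have h2s : (0:ℝ) < 2*s := by linarith
  set e : ℝ := 1/(2*s) with he
  have he0 : 0 < e := by positivity
  have he2 : (1:ℝ)/2 ≤ e := by
    rw [he, div_le_div_iff₀ (by norm_num) h2s]; nlinarith
  refine ⟨100, by norm_num, ?_⟩
  intro C₀ hC₀ m hm
  have hm4f : (0:ℝ) < ((m-4).factorial : ℝ) := by exact_mod_cast Nat.factorial_pos _
  -- pointwise bound
  have key : ∀ j ∈ Finset.Ico 1 (m/2),
      (m.factorial : ℝ) / ((j : ℝ) * ((m - j : ℕ) : ℝ) ^ 4)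
            * ((j - 1).factorial : ℝ) ^ e * ((m - j - 4).factorial : ℝ) ^ e
      ≤ 16 * ((m-4).factorial : ℝ) * ((m-5).factorial : ℝ) ^ e * ((1:ℝ)/(j:ℝ)) := by
    intro j hj
    rw [Finset.mem_Ico] at hj
    obtain ⟨hj1, hj2⟩ := hj
    have hjR : (0:ℝ) < (j:ℝ) := by exact_mod_cast hj1
    have hmjR : (0:ℝ) < ((m-j:ℕ):ℝ) := by
      have : 0 < m - j := by omega
      exact_mod_cast this
    -- factorial product bound
    have hB : ((j-1).factorial : ℝ) ^ e * ((m-j-4).factorial : ℝ) ^ e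
        ≤ ((m-5).factorial : ℝ) ^ e := by
      rw [← Real.mul_rpow (by positivity) (by positivity)]
      apply Real.rpow_le_rpow (by positivity) _ he0.le
      have hnat : (j-1).factorial * (m-j-4).factorial ≤ (m-5).factorial := by
        have hsum : (j-1) + (m-j-4) = m-5 := by omega
        calc (j-1).factorial * (m-j-4).factorial
            ≤ ((j-1)+(m-j-4)).factorial :=
              Nat.le_of_dvd (Nat.factorial_pos _)
                (Nat.factorial_mul_factorial_dvd_factorial_add _ _)
          _ = (m-5).factorial := by rw [hsum]
      exact_mod_cast hnat
    -- fraction bound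
    have hA : (m.factorial : ℝ) / ((j : ℝ) * ((m - j : ℕ) : ℝ) ^ 4)
        ≤ 16 * ((m-4).factorial : ℝ) / (j:ℝ) := by
      rw [div_le_div_iff₀ (by positivity) hjR]
      have hmle : (m:ℝ) ≤ 2 * ((m-j:ℕ):ℝ) := by
        have : m ≤ 2*(m-j) := by omega
        exact_mod_cast this
      have hm4 : (m:ℝ)^4 ≤ 16 * ((m-j:ℕ):ℝ)^4 := by
        have := pow_le_pow_left₀ (by positivity : (0:ℝ) ≤ (m:ℝ)) hmle 4
        nlinarith [this]
      have hmf : (m.factorial : ℝ) ≤ (m:ℝ)^4 * ((m-4).factorial : ℝ) := by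
        obtain ⟨k, rfl⟩ : ∃ k, m = k + 5 := ⟨m - 5, by omega⟩
        have := fact_le_pow_mul k
        have h45 : k + 5 - 4 = k + 1 := by omega
        rw [h45]
        exact_mod_cast this
      calc (m.factorial : ℝ) * (j:ℝ)
          ≤ ((m:ℝ)^4 * ((m-4).factorial : ℝ)) * (j:ℝ) := by
            apply mul_le_mul_of_nonneg_right hmf hjR.le
        _ ≤ (16 * ((m-j:ℕ):ℝ)^4 * ((m-4).factorial : ℝ)) * (j:ℝ) := by
            apply mul_le_mul_of_nonneg_right _ hjR.le
            apply mul_le_mul_of_nonneg_right hm4 hm4f.le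
        _ = 16 * ((m-4).factorial : ℝ) * ((j:ℝ) * ((m-j:ℕ):ℝ)^4) := by ring
    calc (m.factorial : ℝ) / ((j : ℝ) * ((m - j : ℕ) : ℝ) ^ 4)
            * ((j - 1).factorial : ℝ) ^ e * ((m - j - 4).factorial : ℝ) ^ e
        = (m.factorial : ℝ) / ((j : ℝ) * ((m - j : ℕ) : ℝ) ^ 4)
            * (((j - 1).factorial : ℝ) ^ e * ((m - j - 4).factorial : ℝ) ^ e) := by ring
      _ ≤ (16 * ((m-4).factorial : ℝ) / (j:ℝ)) * (((m-5).factorial : ℝ) ^ e) := by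
          apply mul_le_mul hA hB (by positivity) (by positivity)
      _ = 16 * ((m-4).factorial : ℝ) * ((m-5).factorial : ℝ) ^ e * ((1:ℝ)/(j:ℝ)) := by
          ring
  have hsum := Finset.sum_le_sum key
  -- harmonic bound
  have hhalf : 2 ≤ m/2 := by omega
  have hharm : ∑ j ∈ Finset.Ico 1 (m/2), (1:ℝ)/(j:ℝ) ≤ 2 * Real.sqrt m := by
    have h1 : m/2 = (m/2 - 1) + 1 := by omega
    rw [h1]
    calc ∑ j ∈ Finset.Ico 1 ((m/2-1)+1), (1:ℝ)/(j:ℝ)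
        ≤ 2 * Real.sqrt (m/2-1 : ℕ) := harmonic_le' _
      _ ≤ 2 * Real.sqrt m := by
          gcongr
          exact_mod_cast Nat.le_of_lt_succ (by omega : m/2 - 1 < m + 1)
  -- assemble
  have hfs : (0:ℝ) ≤ ((m-5).factorial : ℝ) ^ e := by positivity
  have hcoef : (0:ℝ) ≤ 16 * ((m-4).factorial : ℝ) * ((m-5).factorial : ℝ) ^ e := by positivity
  have hmain : ∑ j ∈ Finset.Ico 1 (m / 2),
          (m.factorial : ℝ) / ((j : ℝ) * ((m - j : ℕ) : ℝ) ^ 4)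
            * ((j - 1).factorial : ℝ) ^ e
            * ((m - j - 4).factorial : ℝ) ^ e
      ≤ 16 * ((m-4).factorial : ℝ) * ((m-5).factorial : ℝ) ^ e * (2 * Real.sqrt m) := by
    calc _ ≤ ∑ j ∈ Finset.Ico 1 (m/2),
            16 * ((m-4).factorial : ℝ) * ((m-5).factorial : ℝ) ^ e * ((1:ℝ)/(j:ℝ)) := hsum
      _ = 16 * ((m-4).factorial : ℝ) * ((m-5).factorial : ℝ) ^ e
            * ∑ j ∈ Finset.Ico 1 (m/2), (1:ℝ)/(j:ℝ) := by rw [Finset.mul_sum]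
      _ ≤ _ := by
          apply mul_le_mul_of_nonneg_left hharm hcoef
  -- final numeric/rpow manipulations
  have hsqrt : Real.sqrt m ≤ 3 * ((m-4:ℕ):ℝ) ^ e := by
    have hm4R : (1:ℝ) ≤ ((m-4:ℕ):ℝ) := by
      have : 1 ≤ m - 4 := by omega
      exact_mod_cast this
    have h5 : (m:ℝ) ≤ 9 * ((m-4:ℕ):ℝ) := by
      have : m ≤ 9 * (m-4) := by omega
      exact_mod_cast this
    calc Real.sqrt m ≤ Real.sqrt (9 * ((m-4:ℕ):ℝ)) := Real.sqrt_le_sqrt h5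
      _ = 3 * Real.sqrt ((m-4:ℕ):ℝ) := by
          rw [show (9:ℝ) * ((m-4:ℕ):ℝ) = 3^2 * ((m-4:ℕ):ℝ) by norm_num,
            Real.sqrt_mul (by positivity), Real.sqrt_sq (by norm_num)]
      _ = 3 * ((m-4:ℕ):ℝ) ^ ((1:ℝ)/2) := by
          rw [Real.sqrt_eq_rpow]
      _ ≤ 3 * ((m-4:ℕ):ℝ) ^ e := by
          have := Real.rpow_le_rpow_of_exponent_le hm4R he2
          linarith
  have hfe : ((m-5).factorial : ℝ) ^ e * ((m-4:ℕ):ℝ) ^ e = ((m-4).factorial : ℝ) ^ e := by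
    rw [← Real.mul_rpow (by positivity) (by positivity)]
    congr 1
    have hnat : (m-5).factorial * (m-4) = (m-4).factorial := by
      rw [show m-4 = (m-5)+1 from by omega, Nat.factorial_succ]; ring
    exact_mod_cast hnat
  have hexp : (1+2*s)/(2*s) = 1 + e := by rw [he]; field_simp; ring
  calc ∑ j ∈ Finset.Ico 1 (m / 2),
          (m.factorial : ℝ) / ((j : ℝ) * ((m - j : ℕ) : ℝ) ^ 4)
            * ((j - 1).factorial : ℝ) ^ e
            * ((m - j - 4).factorial : ℝ) ^ e
      ≤ 16 * ((m-4).factorial : ℝ) * ((m-5).factorial : ℝ) ^ e * (2 * Real.sqrt m) := hmain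
    _ ≤ 16 * ((m-4).factorial : ℝ) * ((m-5).factorial : ℝ) ^ e
          * (2 * (3 * ((m-4:ℕ):ℝ) ^ e)) := by
        apply mul_le_mul_of_nonneg_left _ hcoef
        linarith [hsqrt]
    _ = 96 * ((m-4).factorial : ℝ) * (((m-5).factorial : ℝ) ^ e * ((m-4:ℕ):ℝ) ^ e) := by ring
    _ = 96 * ((m-4).factorial : ℝ) * ((m-4).factorial : ℝ) ^ e := by rw [hfe]
    _ = 96 * ((m-4).factorial : ℝ) ^ (1+e) := by
        rw [Real.rpow_add hm4f, Real.rpow_one]; ring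
    _ ≤ 100 * C₀ * ((m-4).factorial : ℝ) ^ (1+e) := by
        have h0 : (0:ℝ) ≤ ((m-4).factorial : ℝ) ^ (1+e) := by positivity
        nlinarith
    _ = 100 * C₀ * ((m-4).factorial : ℝ) ^ ((1+2*s)/(2*s)) := by rw [hexp]
end
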